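/- Let NF = !![1,0,0,1,0,1,1; 0,1,0,1,1,0,1; 0,0,1,0,1,1,1] over ZMod 5 (a representation of the non-Fano matroid F₇⁻). The 3 × 8 matrices [NF | (1,1,3)ᵀ] and [NF | (1,1,4)ᵀ] obtained by appending the columns (1,1,3)ᵀ and (1,1,4)ᵀ respectively are geometrically equivalent over ZMod 5, and they are equal as labeled matroids: for every S ⊆ Fin 8, S is independent in [NF | (1,1,3)ᵀ] iff S is independent in [NF | (1,1,4)ᵀ]. -/

import Mathlib

/-- Two matrices are geometrically equivalent if one is obtained from the other by
elementary row operations (an invertible matrix `Q`), column scaling (an invertible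
diagonal matrix), and column permutations (a permutation matrix). -/
def GeomEquiv {F : Type*} [Field F] {r n : ℕ}
    (A A' : Matrix (Fin r) (Fin n) F) : Prop :=
  ∃ (Q : Matrix (Fin r) (Fin r) F) (d : Fin n → F) (σ : Equiv.Perm (Fin n)),
    IsUnit Q ∧ (∀ j, d j ≠ 0) ∧
    A' = Q * A * Matrix.diagonal d * σ.permMatrix F

/-- Two matrices are projectively equivalent if one is obtained from the other by
elementary row operations and column scaling. -/
def ProjEquiv {F : Type*} [Field F] {r n : ℕ}
    (A A' : Matrix (Fin r) (Fin n) F) : Prop :=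
  ∃ (Q : Matrix (Fin r) (Fin r) F) (d : Fin n → F),
    IsUnit Q ∧ (∀ j, d j ≠ 0) ∧ A' = Q * A * Matrix.diagonal d

/-- A set `S` of column indices is independent in `A` if the corresponding columns
of `A` are linearly independent. -/
def Indep {F : Type*} [Field F] {r n : ℕ}
    (A : Matrix (Fin r) (Fin n) F) (S : Set (Fin n)) : Prop :=
  LinearIndependent F (fun s : S => A.transpose s.val)

/-- The matrix `[A | x]` obtained from `A` by appending the column `x`. -/
def appendCol {F : Type*} [Field F] {r n : ℕ}
    (A : Matrix (Fin r) (Fin n) F) (x : Fin r → F) :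
    Matrix (Fin r) (Fin (n + 1)) F :=
  Matrix.of fun i => Fin.snoc (A i) (x i)

instance : Fact (Nat.Prime 3) := ⟨by norm_num⟩
instance : Fact (Nat.Prime 5) := ⟨by norm_num⟩

section Bridge

variable {F V ι : Type*} [Field F] [AddCommGroup V] [Module F V] (v : ι → V)

lemma li_single (a : ι) :
    LinearIndependent F (fun s : ({a} : Set ι) => v s.val) ↔ v a ≠ 0 := by
  rw [linearIndependent_unique_iff]
  rfl

def pairEquiv {a b : ι} [DecidableEq ι] (hab : a ≠ b) : Fin 2 ≃ ({a, b} : Set ι) where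
  toFun := ![⟨a, by simp⟩, ⟨b, by simp⟩]
  invFun s := if s.val = a then 0 else 1
  left_inv i := by fin_cases i <;> simp [hab, hab.symm]
  right_inv := by
    rintro ⟨s, hs⟩
    rcases hs with rfl | rfl <;> simp [hab, hab.symm]

lemma li_pair [DecidableEq ι] {a b : ι} (hab : a ≠ b) :
    LinearIndependent F (fun s : ({a, b} : Set ι) => v s.val) ↔
      ∀ x y : F, x • v a + y • v b = 0 → x = 0 ∧ y = 0 := by
  rw [← linearIndependent_equiv (pairEquiv hab) (f := fun s : ({a, b} : Set ι) => v s.val)]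
  rw [Fintype.linearIndependent_iff]
  constructor
  · intro H x y h
    have := H ![x, y] (by simpa [Fin.sum_univ_two, pairEquiv] using h)
    exact ⟨this 0, this 1⟩
  · intro H g hg
    have := H (g 0) (g 1) (by simpa [Fin.sum_univ_two, pairEquiv] using hg)
    intro i; fin_cases i <;> tauto

def tripleEquiv {a b c : ι} [DecidableEq ι] (hab : a ≠ b) (hac : a ≠ c) (hbc : b ≠ c) :
    Fin 3 ≃ ({a, b, c} : Set ι) where
  toFun := ![⟨a, by simp⟩, ⟨b, by simp⟩, ⟨c, by simp⟩]
  invFun s := if s.val = a then 0 else if s.val = b then 1 else 2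
  left_inv i := by fin_cases i <;> simp [hab, hab.symm, hac, hac.symm, hbc, hbc.symm]
  right_inv := by
    rintro ⟨s, hs⟩
    rcases hs with rfl | rfl | rfl <;> simp [hab, hab.symm, hac, hac.symm, hbc, hbc.symm]

lemma li_triple_det [DecidableEq ι] (w : ι → (Fin 3 → F)) {a b c : ι}
    (hab : a ≠ b) (hac : a ≠ c) (hbc : b ≠ c) :
    LinearIndependent F (fun s : ({a, b, c} : Set ι) => w s.val) ↔
      w a 0 * (w b 1 * w c 2 - w c 1 * w b 2) -
      w a 1 * (w b 0 * w c 2 - w c 0 * w b 2) +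
      w a 2 * (w b 0 * w c 1 - w c 0 * w b 1) ≠ 0 := by
  rw [← linearIndependent_equiv (tripleEquiv hab hac hbc)
    (f := fun s : ({a, b, c} : Set ι) => w s.val)]
  have he : ((fun s : ({a, b, c} : Set ι) => w s.val) ∘ (tripleEquiv hab hac hbc)) =
      (Matrix.of ![w a, w b, w c]).row := by
    funext i; fin_cases i <;> rfl
  rw [he, Matrix.linearIndependent_rows_iff_isUnit, Matrix.isUnit_iff_isUnit_det,
    isUnit_iff_ne_zero, Matrix.det_fin_three]
  simp only [Matrix.of_apply, Matrix.cons_val', Matrix.cons_val_zero, Matrix.cons_val_one,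
    Matrix.head_cons, Matrix.cons_val_two, Matrix.tail_cons, Matrix.empty_val',
    Matrix.cons_val_fin_one, Matrix.head_fin_const]
  constructor <;> (intro h hc; exact h (by linear_combination hc))

end Bridge

def NF3 : Matrix (Fin 3) (Fin 8) (ZMod 5) :=
  appendCol !![1,0,0,1,0,1,1; 0,1,0,1,1,0,1; 0,0,1,0,1,1,1] ![1,1,3]

def NF4 : Matrix (Fin 3) (Fin 8) (ZMod 5) :=
  appendCol !![1,0,0,1,0,1,1; 0,1,0,1,1,0,1; 0,0,1,0,1,1,1] ![1,1,4]

lemma key1 : ∀ a : Fin 8, NF3.transpose a ≠ 0 ↔ NF4.transpose a ≠ 0 := by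
  intro a; fin_cases a <;> decide

set_option maxHeartbeats 1000000 in
lemma key2 : ∀ a b : Fin 8,
    ((∀ x y : ZMod 5, x • NF3.transpose a + y • NF3.transpose b = 0 → x = 0 ∧ y = 0) ↔
     (∀ x y : ZMod 5, x • NF4.transpose a + y • NF4.transpose b = 0 → x = 0 ∧ y = 0)) := by
  decide

set_option maxHeartbeats 1000000 in
lemma key3 : ∀ a b c : Fin 8,
    (NF3.transpose a 0 * (NF3.transpose b 1 * NF3.transpose c 2 -
        NF3.transpose c 1 * NF3.transpose b 2) -
      NF3.transpose a 1 * (NF3.transpose b 0 * NF3.transpose c 2 -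
        NF3.transpose c 0 * NF3.transpose b 2) +
      NF3.transpose a 2 * (NF3.transpose b 0 * NF3.transpose c 1 -
        NF3.transpose c 0 * NF3.transpose b 1) ≠ 0 ↔
     NF4.transpose a 0 * (NF4.transpose b 1 * NF4.transpose c 2 -
        NF4.transpose c 1 * NF4.transpose b 2) -
      NF4.transpose a 1 * (NF4.transpose b 0 * NF4.transpose c 2 -
        NF4.transpose c 0 * NF4.transpose b 2) +
      NF4.transpose a 2 * (NF4.transpose b 0 * NF4.transpose c 1 -
        NF4.transpose c 0 * NF4.transpose b 1) ≠ 0) := by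
  decide

lemma card_le_of_indep (A : Matrix (Fin 3) (Fin 8) (ZMod 5)) (T : Finset (Fin 8))
    (h : Indep A (T : Set (Fin 8))) : T.card ≤ 3 := by
  have := h.fintype_card_le_finrank
  simpa [Module.finrank_fin_fun] using this

/-- The extensions of the non-Fano matrix `NF` by the columns `(1,1,3)ᵀ` and
`(1,1,4)ᵀ` are geometrically equivalent over `GF(5)` and equal as labeled matroids. -/
theorem nonFano_ext_113_114 :
    let NF : Matrix (Fin 3) (Fin 7) (ZMod 5) :=
      !![1,0,0,1,0,1,1; 0,1,0,1,1,0,1; 0,0,1,0,1,1,1]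
    GeomEquiv (appendCol NF ![1,1,3]) (appendCol NF ![1,1,4]) ∧
      ∀ S : Set (Fin 8),
        Indep (appendCol NF ![1,1,3]) S ↔ Indep (appendCol NF ![1,1,4]) S := by
  intro NF
  constructor
  · refine ⟨!![0,1,4;1,0,4;0,0,4], ![1,1,4,1,4,4,4,2],
      Equiv.swap 0 1 * Equiv.swap 2 6, ?_, by decide, by decide⟩
    rw [Matrix.isUnit_iff_isUnit_det, isUnit_iff_ne_zero]
    decide
  · intro S
    have hS : S.Finite := Set.toFinite S
    have hco : (hS.toFinset : Set (Fin 8)) = S := hS.coe_toFinset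
    rw [← hco]
    set T := hS.toFinset with hT
    clear_value T
    by_cases hc : T.card ≤ 3
    · show Indep NF3 _ ↔ Indep NF4 _
      have : T.card = 0 ∨ T.card = 1 ∨ T.card = 2 ∨ T.card = 3 := by omega
      rcases this with hc0 | hc1 | hc2 | hc3
      · obtain rfl := Finset.card_eq_zero.mp hc0
        simp only [Finset.coe_empty]
        constructor <;> intro _ <;> exact linearIndependent_empty_type
      · obtain ⟨a, rfl⟩ := Finset.card_eq_one.mp hc1
        simp only [Finset.coe_singleton]
        rw [Indep, Indep]
        exact (li_single (fun i : Fin 8 => (NF3.transpose i : Fin 3 → ZMod 5)) a).trans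
          ((key1 a).trans (li_single (fun i : Fin 8 => (NF4.transpose i : Fin 3 → ZMod 5)) a).symm)
      · obtain ⟨a, b, hab, rfl⟩ := Finset.card_eq_two.mp hc2
        simp only [Finset.coe_insert, Finset.coe_singleton]
        rw [Indep, Indep]
        exact (li_pair (fun i : Fin 8 => (NF3.transpose i : Fin 3 → ZMod 5)) hab).trans
          ((key2 a b).trans (li_pair (fun i : Fin 8 => (NF4.transpose i : Fin 3 → ZMod 5)) hab).symm)
      · obtain ⟨a, b, c, hab, hac, hbc, rfl⟩ := Finset.card_eq_three.mp hc3
        simp only [Finset.coe_insert, Finset.coe_singleton]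
        rw [Indep, Indep]
        exact (li_triple_det (fun i : Fin 8 => (NF3.transpose i : Fin 3 → ZMod 5)) hab hac hbc).trans
          ((key3 a b c).trans
            (li_triple_det (fun i : Fin 8 => (NF4.transpose i : Fin 3 → ZMod 5)) hab hac hbc).symm)
    · constructor
      · intro h; exact absurd (card_le_of_indep NF3 T h) hc
      · intro h; exact absurd (card_le_of_indep NF4 T h) hc
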